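/- Suppose Q : ℝⁿ → Matrix (Fin m) (Fin m) ℝ is a conservative Q-matrix field admitting a family of invariant distributions μ^x, uniformly exponentially ergodic with constants C₀, λ, and let F : ℝⁿ × Fin m → ℝⁿ satisfy the central condition. Then for every x the function Φ(x,i) := ∫₀^∞ (P^x_t F(x,·))(i) dt (componentwise Bochner integral) is well defined (the integrand is integrable on [0,∞)), it solves the Poisson equation −(Q(x) Φ(x,·))(i) = F(x,i) for every i ∈ Fin m (componentwise), and there is a constant C > 0 depending only on C₀ and λ with ‖Φ(x,·)‖_∞ ≤ C ‖F(x,·)‖_∞ for all x. -/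

import Mathlib

open MeasureTheory

noncomputable section

/-- Solution candidate `Φ(x,i) := ∫₀^∞ (P^x_t F(x,·))(i) dt` of the Poisson equation,
defined by componentwise Bochner integration. -/
def poissonSol {n m : ℕ} (Q : EuclideanSpace ℝ (Fin n) → Matrix (Fin m) (Fin m) ℝ)
    (F : EuclideanSpace ℝ (Fin n) → Fin m → EuclideanSpace ℝ (Fin n))
    (x : EuclideanSpace ℝ (Fin n)) (i : Fin m) : EuclideanSpace ℝ (Fin n) :=
  WithLp.toLp 2 (fun l => ∫ t in Set.Ici (0:ℝ), (NormedSpace.exp (t • Q x)).mulVec (fun j => F x j l) i)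

open Filter

/-- Derivative in `t` of `(exp (t • M)).mulVec v i`. -/
lemma hasDerivAt_expMulVec {m : ℕ} (M : Matrix (Fin m) (Fin m) ℝ)
    (v : Fin m → ℝ) (i : Fin m) (t : ℝ) :
    HasDerivAt (fun s : ℝ => (NormedSpace.exp (s • M)).mulVec v i)
      ((M * NormedSpace.exp (t • M)).mulVec v i) t := by
  letI : SeminormedRing (Matrix (Fin m) (Fin m) ℝ) := Matrix.linftyOpSemiNormedRing
  letI : NormedRing (Matrix (Fin m) (Fin m) ℝ) := Matrix.linftyOpNormedRing
  letI : NormedAlgebra ℝ (Matrix (Fin m) (Fin m) ℝ) := Matrix.linftyOpNormedAlgebra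
  have h := hasDerivAt_exp_smul_const' (𝕂 := ℝ) M t
  let L : Matrix (Fin m) (Fin m) ℝ →ₗ[ℝ] ℝ :=
    { toFun := fun A => A.mulVec v i
      map_add' := fun A B => by simp [Matrix.add_mulVec]
      map_smul' := fun c A => by simp [Matrix.smul_mulVec] }
  have h2 := (L.toContinuousLinearMap.hasFDerivAt
    (x := NormedSpace.exp (t • M))).comp_hasDerivAt t h
  exact h2

lemma abs_apply_le_norm' {n : ℕ} (w : EuclideanSpace ℝ (Fin n)) (l : Fin n) : |w l| ≤ ‖w‖ := by
  rw [EuclideanSpace.norm_eq w]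
  have h : |w l| = Real.sqrt (‖w l‖ ^ 2) := by
    rw [Real.sqrt_sq_eq_abs, Real.norm_eq_abs, abs_abs]
  rw [h]
  exact Real.sqrt_le_sqrt
    (Finset.single_le_sum (fun j _ => sq_nonneg ‖w j‖) (Finset.mem_univ l))

lemma integral_exp_neg_mul' {lam : ℝ} (hlam : 0 < lam) :
    ∫ t in Set.Ioi (0:ℝ), Real.exp (-lam * t) = 1 / lam := by
  have hd : ∀ s ∈ Set.Ioi (0:ℝ), HasDerivAt (fun t : ℝ => -(Real.exp (-lam * t) / lam))
      (Real.exp (-lam * s)) s := by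
    intro s _
    have h1 : HasDerivAt (fun t : ℝ => -lam * t) (-lam) s := by
      simpa using (hasDerivAt_id s).const_mul (-lam)
    have h2 := (Real.hasDerivAt_exp (-lam * s)).comp s h1
    have h3 := (h2.div_const lam).neg
    convert h3 using 1
    · rfl
    · rfl
    · rfl
    · field_simp
  have hcont : ContinuousWithinAt (fun t : ℝ => -(Real.exp (-lam * t) / lam)) (Set.Ici 0) 0 :=
    (Continuous.continuousWithinAt (by continuity))
  have htend : Tendsto (fun t : ℝ => -(Real.exp (-lam * t) / lam)) atTop (nhds 0) := by
    have h0 : Tendsto (fun t : ℝ => Real.exp (-lam * t)) atTop (nhds 0) := by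
      have h1 : Tendsto (fun t : ℝ => lam * t) atTop atTop :=
        Tendsto.const_mul_atTop hlam tendsto_id
      exact (Real.tendsto_exp_neg_atTop_nhds_zero.comp h1).congr
        (fun t => by simp [Function.comp, neg_mul])
    simpa using (h0.div_const lam).neg
  have := integral_Ioi_of_hasDerivAt_of_tendsto hcont hd
    (exp_neg_integrableOn_Ioi 0 hlam) htend
  rw [this]; simp

/-- Existence, bound, and validity of the solution `Φ(x,i) = ∫₀^∞ (P^x_t F(x,·))(i) dt`
of the Poisson equation `−Q(x)Φ(x,·)(i) = F(x,i)` on a finite state space, for a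
conservative, uniformly exponentially ergodic `Q`-matrix field and `F` satisfying
the central condition `Σᵢ F(x,i) μ^x_i = 0`. -/
theorem poisson_equation_solution (C₀ lam : ℝ) (hC₀ : 0 < C₀) (hlam : 0 < lam) :
    ∃ C > 0, ∀ (n m : ℕ) (Q : EuclideanSpace ℝ (Fin n) → Matrix (Fin m) (Fin m) ℝ)
      (μ : EuclideanSpace ℝ (Fin n) → Fin m → ℝ)
      (F : EuclideanSpace ℝ (Fin n) → Fin m → EuclideanSpace ℝ (Fin n)),
      (∀ x i j, i ≠ j → 0 ≤ Q x i j) →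
      (∀ x i, ∑ j, Q x i j = 0) →
      (∀ x i, 0 < μ x i) →
      (∀ x, ∑ i, μ x i = 1) →
      (∀ x j, ∑ i, μ x i * Q x i j = 0) →
      (∀ x i (t : ℝ), 0 ≤ t →
        ∑ j, |NormedSpace.exp (t • Q x) i j - μ x j| ≤ C₀ * Real.exp (-lam * t)) →
      -- central condition
      (∀ x, ∑ i, μ x i • F x i = 0) →
      ∀ x : EuclideanSpace ℝ (Fin n),
        -- the integrand is (componentwise) integrable on [0, ∞), so Φ is well defined
        (∀ (l : Fin n) (i : Fin m),
          IntegrableOn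
            (fun t : ℝ => (NormedSpace.exp (t • Q x)).mulVec (fun j => F x j l) i)
            (Set.Ici 0)) ∧
        -- Φ solves the Poisson equation −Q(x)Φ(x,·)(i) = F(x,i) componentwise
        (∀ (i : Fin m) (l : Fin n),
          -((Q x).mulVec (fun j => poissonSol Q F x j l) i) = F x i l) ∧
        -- the bound ‖Φ(x,·)‖_∞ ≤ C ‖F(x,·)‖_∞
        (∀ i : Fin m, ‖poissonSol Q F x i‖ ≤ C * ⨆ j, ‖F x j‖) := by
  refine ⟨C₀ / lam, div_pos hC₀ hlam, ?_⟩
  intro n m Q μ F hq hrow hpos hsum hinv herg hcent x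
  set S := ⨆ j, ‖F x j‖ with hSdef
  have hS0 : 0 ≤ S := Real.iSup_nonneg fun j => norm_nonneg _
  have hFS : ∀ j, ‖F x j‖ ≤ S := fun j => by
    rw [hSdef]
    exact le_ciSup (Set.finite_range fun j => ‖F x j‖).bddAbove j
  -- componentwise central condition
  have hcent' : ∀ l : Fin n, ∑ j, μ x j * F x j l = 0 := by
    intro l
    have h := congrArg (EuclideanSpace.proj (𝕜 := ℝ) l) (hcent x)
    rw [map_sum, map_zero] at h
    simpa [smul_eq_mul] using h
  -- rewrite the integrand using the central condition
  have hrew : ∀ (i : Fin m) (l : Fin n) (t : ℝ),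
      (NormedSpace.exp (t • Q x)).mulVec (fun j => F x j l) i
        = ∑ j, (NormedSpace.exp (t • Q x) i j - μ x j) * F x j l := by
    intro i l t
    simp [Matrix.mulVec, dotProduct, sub_mul, Finset.sum_sub_distrib, hcent' l]
  -- pointwise exponential bound for the scalar integrands
  have hbound : ∀ (i : Fin m) (l : Fin n) (t : ℝ), 0 ≤ t →
      |(NormedSpace.exp (t • Q x)).mulVec (fun j => F x j l) i|
        ≤ C₀ * Real.exp (-lam * t) * S := by
    intro i l t ht
    rw [hrew]
    calc |∑ j, (NormedSpace.exp (t • Q x) i j - μ x j) * F x j l|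
        ≤ ∑ j, |(NormedSpace.exp (t • Q x) i j - μ x j) * F x j l| :=
          Finset.abs_sum_le_sum_abs _ _
      _ ≤ ∑ j, |NormedSpace.exp (t • Q x) i j - μ x j| * S := by
          refine Finset.sum_le_sum fun j _ => ?_
          rw [abs_mul]
          exact mul_le_mul_of_nonneg_left
            ((abs_apply_le_norm' _ _).trans (hFS j)) (abs_nonneg _)
      _ = (∑ j, |NormedSpace.exp (t • Q x) i j - μ x j|) * S := by
          rw [Finset.sum_mul]
      _ ≤ C₀ * Real.exp (-lam * t) * S :=
          mul_le_mul_of_nonneg_right (herg x i t ht) hS0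
  -- integrability of the dominating function
  have hbint : IntegrableOn (fun t : ℝ => C₀ * Real.exp (-lam * t) * S) (Set.Ici (0:ℝ)) := by
    rw [integrableOn_Ici_iff_integrableOn_Ioi]
    exact ((exp_neg_integrableOn_Ioi 0 hlam).const_mul C₀).mul_const S
  -- continuity of scalar integrands
  have hgcont : ∀ (i : Fin m) (v : Fin m → ℝ),
      Continuous (fun t : ℝ => (NormedSpace.exp (t • Q x)).mulVec v i) := by
    intro i v
    rw [continuous_iff_continuousAt]
    exact fun t => (hasDerivAt_expMulVec (Q x) v i t).continuousAt
  -- Part 1: integrability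
  have hInt : ∀ (l : Fin n) (i : Fin m),
      IntegrableOn
        (fun t : ℝ => (NormedSpace.exp (t • Q x)).mulVec (fun j => F x j l) i)
        (Set.Ici 0) := by
    intro l i
    refine Integrable.mono' hbint ((hgcont i _).aestronglyMeasurable.restrict) ?_
    refine (ae_restrict_iff' measurableSet_Ici).2 (Filter.Eventually.of_forall fun t ht => ?_)
    simpa [Real.norm_eq_abs] using hbound i l t ht
  -- tendsto of the dominating function to zero
  have hbtend : Tendsto (fun t : ℝ => C₀ * Real.exp (-lam * t) * S) atTop (nhds 0) := by
    have h1 : Tendsto (fun t : ℝ => lam * t) atTop atTop :=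
      Tendsto.const_mul_atTop hlam tendsto_id
    have h0 : Tendsto (fun t : ℝ => Real.exp (-lam * t)) atTop (nhds 0) :=
      (Real.tendsto_exp_neg_atTop_nhds_zero.comp h1).congr
        (fun t => by simp [Function.comp, neg_mul])
    simpa using (h0.const_mul C₀).mul_const S
  -- Part 2: the Poisson equation
  have hPoisson : ∀ (i : Fin m) (l : Fin n),
      -((Q x).mulVec (fun j => poissonSol Q F x j l) i) = F x i l := by
    intro i l
    set v : Fin m → ℝ := fun j => F x j l with hv
    have key : (Q x).mulVec (fun j => poissonSol Q F x j l) i = -(v i) := by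
      have step1 : (Q x).mulVec (fun j => poissonSol Q F x j l) i
          = ∑ j, Q x i j *
            ∫ t in Set.Ici (0:ℝ), (NormedSpace.exp (t • Q x)).mulVec v j := by
        simp [Matrix.mulVec, dotProduct, poissonSol, v]
      have step2 : ∀ j : Fin m, Q x i j *
            (∫ t in Set.Ici (0:ℝ), (NormedSpace.exp (t • Q x)).mulVec v j)
          = ∫ t in Set.Ici (0:ℝ), Q x i j * (NormedSpace.exp (t • Q x)).mulVec v j :=
        fun j => (MeasureTheory.integral_const_mul _ _).symm
      have step3 : ∑ j, (∫ t in Set.Ici (0:ℝ),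
            Q x i j * (NormedSpace.exp (t • Q x)).mulVec v j)
          = ∫ t in Set.Ici (0:ℝ), ∑ j, Q x i j * (NormedSpace.exp (t • Q x)).mulVec v j :=
        (integral_finset_sum Finset.univ (fun j _ => ((hInt l j).const_mul _))).symm
      have step4 : (fun t : ℝ => ∑ j, Q x i j * (NormedSpace.exp (t • Q x)).mulVec v j)
          = fun t : ℝ => (Q x * NormedSpace.exp (t • Q x)).mulVec v i := by
        funext t
        rw [← Matrix.mulVec_mulVec]
        simp [Matrix.mulVec, dotProduct]
      have hderiv : ∀ s ∈ Set.Ioi (0:ℝ),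
          HasDerivAt (fun t : ℝ => (NormedSpace.exp (t • Q x)).mulVec v i)
            ((Q x * NormedSpace.exp (s • Q x)).mulVec v i) s :=
        fun s _ => hasDerivAt_expMulVec (Q x) v i s
      have hInt' : IntegrableOn
          (fun s : ℝ => (Q x * NormedSpace.exp (s • Q x)).mulVec v i) (Set.Ioi 0) := by
        rw [← step4]
        exact integrable_finset_sum _
          (fun j _ => IntegrableOn.mono_set ((hInt l j).const_mul _) Set.Ioi_subset_Ici_self)
      have htend : Tendsto (fun t : ℝ => (NormedSpace.exp (t • Q x)).mulVec v i)
          atTop (nhds 0) := by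
        refine squeeze_zero_norm' ?_ hbtend
        exact (eventually_ge_atTop 0).mono fun t ht => by
          simpa [Real.norm_eq_abs] using hbound i l t ht
      have hFTC := integral_Ioi_of_hasDerivAt_of_tendsto
        ((hgcont i v).continuousWithinAt) hderiv hInt' htend
      rw [step1]
      rw [Finset.sum_congr rfl (fun j _ => step2 j), step3]
      have step5 : (∫ t in Set.Ici (0:ℝ),
            ∑ j, Q x i j * (NormedSpace.exp (t • Q x)).mulVec v j)
          = ∫ s in Set.Ioi (0:ℝ), (Q x * NormedSpace.exp (s • Q x)).mulVec v i := by
        rw [step4, MeasureTheory.integral_Ici_eq_integral_Ioi]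
      rw [step5, hFTC]
      simp [Matrix.one_mulVec]
    rw [key, neg_neg]
  -- Part 3: the norm bound
  have hsol : ∀ i : Fin m, ‖poissonSol Q F x i‖ ≤ C₀ / lam * S := by
    intro i
    set G : ℝ → EuclideanSpace ℝ (Fin n) := fun t =>
      ∑ j, (NormedSpace.exp (t • Q x) i j - μ x j) • F x j with hG
    have hGcont : Continuous G := by
      refine continuous_finset_sum _ fun j _ => (?_ : Continuous fun t : ℝ => NormedSpace.exp (t • Q x) i j - μ x j).smul continuous_const
      have hc : Continuous (fun t : ℝ => NormedSpace.exp (t • Q x) i j) := by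
        have := hgcont i (Pi.single j 1)
        simpa [Matrix.mulVec_single] using this
      exact hc.sub continuous_const
    have hGnorm : ∀ t : ℝ, t ∈ Set.Ici (0:ℝ) → ‖G t‖ ≤ C₀ * Real.exp (-lam * t) * S := by
      intro t ht
      calc ‖G t‖ ≤ ∑ j, ‖(NormedSpace.exp (t • Q x) i j - μ x j) • F x j‖ :=
            norm_sum_le _ _
        _ = ∑ j, |NormedSpace.exp (t • Q x) i j - μ x j| * ‖F x j‖ := by
            simp [norm_smul, Real.norm_eq_abs]
        _ ≤ ∑ j, |NormedSpace.exp (t • Q x) i j - μ x j| * S :=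
            Finset.sum_le_sum fun j _ => mul_le_mul_of_nonneg_left (hFS j) (abs_nonneg _)
        _ = (∑ j, |NormedSpace.exp (t • Q x) i j - μ x j|) * S := by
            rw [Finset.sum_mul]
        _ ≤ C₀ * Real.exp (-lam * t) * S :=
            mul_le_mul_of_nonneg_right (herg x i t ht) hS0
    have hGae : ∀ᵐ t ∂(volume.restrict (Set.Ici (0:ℝ))),
        ‖G t‖ ≤ C₀ * Real.exp (-lam * t) * S :=
      (ae_restrict_iff' measurableSet_Ici).2 (Filter.Eventually.of_forall hGnorm)
    have hGint : IntegrableOn G (Set.Ici 0) :=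
      Integrable.mono' hbint hGcont.aestronglyMeasurable.restrict hGae
    have hEq : poissonSol Q F x i = ∫ t in Set.Ici (0:ℝ), G t := by
      ext l
      have hproj := (EuclideanSpace.proj (𝕜 := ℝ) l).integral_comp_comm hGint
      have h1 : ∀ t : ℝ, (EuclideanSpace.proj (𝕜 := ℝ) l) (G t)
          = (NormedSpace.exp (t • Q x)).mulVec (fun j => F x j l) i := by
        intro t
        rw [hrew i l t]
        simp [hG, smul_eq_mul]
      calc poissonSol Q F x i l
          = ∫ t in Set.Ici (0:ℝ), (NormedSpace.exp (t • Q x)).mulVec (fun j => F x j l) i :=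
            rfl
        _ = ∫ t in Set.Ici (0:ℝ), (EuclideanSpace.proj (𝕜 := ℝ) l) (G t) := by
            simp only [h1]
        _ = (EuclideanSpace.proj (𝕜 := ℝ) l) (∫ t in Set.Ici (0:ℝ), G t) := hproj
        _ = (∫ t in Set.Ici (0:ℝ), G t) l := rfl
    rw [hEq]
    calc ‖∫ t in Set.Ici (0:ℝ), G t‖
        ≤ ∫ t in Set.Ici (0:ℝ), C₀ * Real.exp (-lam * t) * S :=
          norm_integral_le_of_norm_le hbint hGae
      _ = C₀ / lam * S := by
          rw [MeasureTheory.integral_Ici_eq_integral_Ioi]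
          have hc : ∀ t : ℝ, C₀ * Real.exp (-lam * t) * S = (C₀ * S) * Real.exp (-lam * t) :=
            fun t => by ring
          simp only [hc]
          rw [MeasureTheory.integral_const_mul, integral_exp_neg_mul' hlam]
          field_simp
  exact ⟨hInt, hPoisson, hsol⟩
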